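/- (Solution 1A of Table 1.) Let a, b ∈ ℂ with a ≠ 0 and b ≠ 0. Let U ⊆ ℂ be a nonempty open set and λ : U → ℂ a twice differentiable function such that for every t ∈ U one has t ∉ {0,1}, λ(t) ∉ {0,1,t}, and a·λ(t)² − b·t = 0. Then λ is a solution of PVI_α with α = (a, b, 1/8, 1/8). -/
import Mathlib


/-- `l : ℂ → ℂ` (viewed as a function on `U`) is a solution of the Painlevé VI equation
`PVI_α` with parameter `α = (α₀, α₁, α₂, α₃)`:  `l` is twice differentiable on `U`, for every
`t ∈ U` one has `t ∉ {0,1}`, `l t ∉ {0,1,t}`, and the Painlevé VI ODE holds on `U`. -/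
def IsPVISolution (α : Fin 4 → ℂ) (U : Set ℂ) (l : ℂ → ℂ) : Prop :=
  (∀ t ∈ U, DifferentiableAt ℂ l t) ∧
  (∀ t ∈ U, DifferentiableAt ℂ (deriv l) t) ∧
  (∀ t ∈ U, t ≠ 0 ∧ t ≠ 1 ∧ l t ≠ 0 ∧ l t ≠ 1 ∧ l t ≠ t) ∧
  (∀ t ∈ U, deriv (deriv l) t =
    (1 / 2) * (1 / l t + 1 / (l t - 1) + 1 / (l t - t)) * (deriv l t) ^ 2
      - (1 / t + 1 / (t - 1) + 1 / (l t - t)) * deriv l t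
      + (l t * (l t - 1) * (l t - t)) / (t ^ 2 * (t - 1) ^ 2) *
        (α 0 - α 1 * t / (l t) ^ 2 + α 2 * (t - 1) / (l t - 1) ^ 2
          + (1 / 2 - α 3) * (t * (t - 1)) / (l t - t) ^ 2))

set_option maxHeartbeats 2000000 in
theorem alg_identity (l t : ℂ) (ht0 : t ≠ 0) (ht1 : t - 1 ≠ 0) (hl0 : l ≠ 0)
    (hl1 : l - 1 ≠ 0) (hlt : l - t ≠ 0) :
    -l / (4 * t ^ 2) =
    (1 / 2) * (1 / l + 1 / (l - 1) + 1 / (l - t)) * (l / (2 * t)) ^ 2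
      - (1 / t + 1 / (t - 1) + 1 / (l - t)) * (l / (2 * t))
      + (l * (l - 1) * (l - t)) / (t ^ 2 * (t - 1) ^ 2) *
        (0 + (1 / 8) * (t - 1) / (l - 1) ^ 2
          + (1 / 2 - 1 / 8) * (t * (t - 1)) / (l - t) ^ 2) := by
  have hC : (2 * (l * (l - 1) * (l - t)) * (2 * t) ^ 2) ≠ 0 := by
    apply mul_ne_zero (mul_ne_zero two_ne_zero (mul_ne_zero (mul_ne_zero hl0 hl1) hlt))
    exact pow_ne_zero 2 (mul_ne_zero two_ne_zero ht0)
  have hF : (t ^ 2 * (t - 1) ^ 2 * (8 * (l - 1) ^ 2 * (2 * 8 * (l - t) ^ 2))) ≠ 0 := by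
    apply mul_ne_zero (mul_ne_zero (pow_ne_zero 2 ht0) (pow_ne_zero 2 ht1))
    apply mul_ne_zero (mul_ne_zero (by norm_num) (pow_ne_zero 2 hl1))
    exact mul_ne_zero (by norm_num) (pow_ne_zero 2 hlt)
  have hE : (2 * (l * (l - 1) * (l - t)) * (2 * t) ^ 2 * (t * (t - 1) * (l - t) * (2 * t))) ≠ 0 := by
    apply mul_ne_zero hC
    exact mul_ne_zero (mul_ne_zero (mul_ne_zero ht0 ht1) hlt) (mul_ne_zero two_ne_zero ht0)
  field_simp
  ring

set_option maxHeartbeats 1000000 in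
theorem stmt2 (a b : ℂ) (ha : a ≠ 0) (hb : b ≠ 0)
    (U : Set ℂ) (hU : U.Nonempty) (hUopen : IsOpen U) (l : ℂ → ℂ)
    (hdiff : ∀ t ∈ U, DifferentiableAt ℂ l t)
    (hdiff2 : ∀ t ∈ U, DifferentiableAt ℂ (deriv l) t)
    (hreg : ∀ t ∈ U, t ≠ 0 ∧ t ≠ 1 ∧ l t ≠ 0 ∧ l t ≠ 1 ∧ l t ≠ t)
    (heq : ∀ t ∈ U, a * (l t) ^ 2 - b * t = 0) :
    IsPVISolution ![a, b, 1 / 8, 1 / 8] U l := by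
  -- First derivative: deriv l s = l s / (2 * s) on U
  have hder : ∀ s ∈ U, deriv l s = l s / (2 * s) := by
    intro s hs
    obtain ⟨hs0, hs1, hl0, hl1, hlt⟩ := hreg s hs
    have hF : HasDerivAt (fun x => a * l x ^ 2 - b * x)
        (a * (2 * l s ^ 1 * deriv l s) - b * 1) s := by
      exact (((hdiff s hs).hasDerivAt.pow 2).const_mul a).sub
        ((hasDerivAt_id s).const_mul b)
    have hev : (fun x => a * l x ^ 2 - b * x) =ᶠ[nhds s] (fun _ => (0 : ℂ)) := by
      filter_upwards [hUopen.mem_nhds hs] with x hx using heq x hx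
    have h0 : deriv (fun x => a * l x ^ 2 - b * x) s = 0 := by
      rw [hev.deriv_eq, deriv_const]
    rw [hF.deriv] at h0
    have h2 : a * (2 * l s * deriv l s) = b := by
      have : a * (2 * l s ^ 1 * deriv l s) - b * 1 = 0 := h0
      simpa using sub_eq_zero.mp this
    field_simp
    have := heq s hs
    have h3 : a * (2 * l s * deriv l s) * s = b * s := by rw [h2]
    have h4 : b * s = a * l s ^ 2 := by linear_combination -this
    rw [h4] at h3
    have h5 : a * l s * (deriv l s * (2 * s) - l s) = 0 := by ring_nf; linear_combination h3
    rcases mul_eq_zero.mp h5 with h | h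
    · exact absurd (mul_eq_zero.mp h) (by simp [ha, hl0])
    · linear_combination h
  refine ⟨hdiff, hdiff2, hreg, ?_⟩
  intro t ht
  obtain ⟨ht0, ht1, hl0, hl1, hlt⟩ := hreg t ht
  have h2t : (2 : ℂ) * t ≠ 0 := by simp [ht0]
  -- Second derivative
  have hG : HasDerivAt (fun x => l x / (2 * x))
      ((deriv l t * (2 * t) - l t * 2) / (2 * t) ^ 2) t := by
    exact (hdiff t ht).hasDerivAt.div (by simpa using (hasDerivAt_id t).const_mul (2:ℂ)) h2t
  have hev : deriv l =ᶠ[nhds t] (fun x => l x / (2 * x)) := by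
    filter_upwards [hUopen.mem_nhds ht] with x hx using hder x hx
  have hdd : deriv (deriv l) t = -(l t) / (4 * t ^ 2) := by
    rw [hev.deriv_eq, hG.deriv, hder t ht]
    field_simp
    ring
  rw [hdd, hder t ht]
  simp only [Matrix.cons_val_zero, Matrix.cons_val_one, Matrix.head_cons,
    Matrix.cons_val_two, Matrix.tail_cons, Matrix.cons_val_three]
  have hbt : b * t = a * l t ^ 2 := by linear_combination -(heq t ht)
  have hl1' : l t - 1 ≠ 0 := sub_ne_zero.mpr hl1
  have hlt' : l t - t ≠ 0 := sub_ne_zero.mpr hlt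
  have ht1' : t - 1 ≠ 0 := sub_ne_zero.mpr ht1
  have key : a - b * t / l t ^ 2 = 0 := by
    field_simp
    linear_combination -hbt
  rw [key]
  exact alg_identity (l t) t ht0 ht1' hl0 hl1' hlt'
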